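/- Let p ≥ 2, q > p-1, and fix t with 1 ≤ t < -1 + 2(q+√(q(q-p+1)))/(p-1). There exist a natural number m₀ ≥ 1 and, for each integer m ≥ m₀, a constant C > 0 depending only on p, q, t, m (in particular independent of Ω, f and u) with the following property: for every integer n ≥ 1, every open set Ω ⊆ ℝⁿ, every continuous f : Ω → ℝ with f ≥ 0, and every positive u ∈ C¹(Ω) which is a weak solution of -Δ_p u = f(x) u^q on Ω and is stable on Ω, one has, for every C¹ function φ : ℝⁿ → ℝ with compact support in Ω and 0 ≤ φ ≤ 1: ∫_Ω (|∇u|^p u^{t-1} + f u^{t+q}) φ^{2m} dx ≤ C ∫_Ω f^{-(t+1)/(q-1)} (|∇u|^{p-2} |∇φ|²)^{(t+q)/(q-1)} dx, where both sides are Lebesgue integrals with values in [0,∞] (the right-hand side may be +∞ where f vanishes). -/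

import Mathlib

open Real MeasureTheory

open Filter Set
open scoped ENNReal NNReal

noncomputable section

lemma ext_lemma {n : ℕ} {Ω : Set (EuclideanSpace ℝ (Fin n))} (hΩ : IsOpen Ω)
    {u φ : EuclideanSpace ℝ (Fin n) → ℝ}
    (hu : ContDiffOn ℝ 1 u Ω) (hupos : ∀ x ∈ Ω, 0 < u x)
    (hφ : ContDiff ℝ 1 φ) (hφc : HasCompactSupport φ) (hφΩ : tsupport φ ⊆ Ω)
    (s : ℝ) (k : ℕ) (hk : 1 ≤ k) :
    ∃ w : EuclideanSpace ℝ (Fin n) → ℝ, ContDiff ℝ 1 w ∧ HasCompactSupport w ∧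
      tsupport w ⊆ Ω ∧ (∀ x ∈ Ω, w x = u x ^ s * φ x ^ k) ∧
      ∀ x ∈ Ω, gradient w x =
        (s * u x ^ (s - 1) * φ x ^ k) • gradient u x +
        ((k : ℝ) * φ x ^ (k - 1) * u x ^ s) • gradient φ x := by
  classical
  set w : EuclideanSpace ℝ (Fin n) → ℝ :=
    fun x => Ω.indicator (fun y => u y ^ s) x * φ x ^ k with hw
  have hwΩ : ∀ x ∈ Ω, w x = u x ^ s * φ x ^ k := fun x hx => by
    simp [hw, Set.indicator_of_mem hx]
  have hw0 : ∀ x, x ∉ tsupport φ → w x = 0 := fun x hx => by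
    simp [hw, image_eq_zero_of_notMem_tsupport hx, zero_pow (by omega : k ≠ 0)]
  have hsupp : Function.support w ⊆ tsupport φ := fun x hx => by
    by_contra h
    exact hx (hw0 x h)
  have htsupp : tsupport w ⊆ Ω :=
    (closure_minimal hsupp (isClosed_tsupport φ)).trans hφΩ
  have hev : ∀ x ∈ Ω, w =ᶠ[nhds x] fun y => u y ^ s * φ y ^ k := by
    intro x hx
    filter_upwards [hΩ.mem_nhds hx] with y hy using hwΩ y hy
  have hev0 : ∀ x, x ∉ Ω → w =ᶠ[nhds x] fun _ => (0 : ℝ) := by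
    intro x hx
    have hx' : x ∈ (tsupport φ)ᶜ := fun h => hx (hφΩ h)
    filter_upwards [(isClosed_tsupport φ).isOpen_compl.mem_nhds hx'] with y hy using hw0 y hy
  have hcd : ContDiff ℝ 1 w := by
    rw [contDiff_iff_contDiffAt]
    intro x
    by_cases hx : x ∈ Ω
    · have h1 : ContDiffAt ℝ 1 (fun y => u y ^ s) x :=
        (hu.contDiffAt (hΩ.mem_nhds hx)).rpow_const_of_ne (ne_of_gt (hupos x hx))
      have h2 : ContDiffAt ℝ 1 (fun y => φ y ^ k) x := (hφ.pow k).contDiffAt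
      exact (h1.mul h2).congr_of_eventuallyEq (hev x hx)
    · exact contDiffAt_const.congr_of_eventuallyEq (hev0 x hx)
  have hcs : HasCompactSupport w :=
    IsCompact.of_isClosed_subset hφc isClosed_closure
      (closure_minimal hsupp (isClosed_tsupport φ))
  refine ⟨w, hcd, hcs, htsupp, hwΩ, ?_⟩
  intro x hx
  have hud : DifferentiableAt ℝ u x :=
    (hu.contDiffAt (hΩ.mem_nhds hx)).differentiableAt one_ne_zero
  have hφd : DifferentiableAt ℝ φ x := (hφ.differentiable one_ne_zero) x
  have hFu := hud.hasGradientAt.hasFDerivAt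
  have hFφ := hφd.hasGradientAt.hasFDerivAt
  have h1 : HasFDerivAt (fun y => u y ^ s)
      ((s * u x ^ (s - 1)) • (InnerProductSpace.toDual ℝ (EuclideanSpace ℝ (Fin n))) (gradient u x)) x :=
    hFu.rpow_const (Or.inl (ne_of_gt (hupos x hx)))
  have h2 : HasFDerivAt (fun y => φ y ^ k)
      (((k : ℝ) * φ x ^ (k - 1)) • (InnerProductSpace.toDual ℝ (EuclideanSpace ℝ (Fin n))) (gradient φ x)) x := by
    exact (hasDerivAt_pow k (φ x)).comp_hasFDerivAt x hFφ
  have h3 := (h1.mul h2).congr_of_eventuallyEq (hev x hx)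
  have h4 := (hasFDerivAt_iff_hasGradientAt).mp h3
  rw [h4.gradient]
  have hsymm : ∀ (c : ℝ) (v : EuclideanSpace ℝ (Fin n)),
      (InnerProductSpace.toDual ℝ (EuclideanSpace ℝ (Fin n))).symm
        (c • (InnerProductSpace.toDual ℝ (EuclideanSpace ℝ (Fin n))) v) = c • v := by
    intro c v
    rw [_root_.map_smul, LinearIsometryEquiv.symm_apply_apply]
  rw [map_add, smul_smul, smul_smul, hsymm, hsymm, add_comm]
  congr 1 <;> · congr 1; ring

lemma integrableOn_of_supp {n : ℕ} {Ω K : Set (EuclideanSpace ℝ (Fin n))}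
    (hΩ : IsOpen Ω) (hK : IsCompact K) (hKΩ : K ⊆ Ω)
    {g : EuclideanSpace ℝ (Fin n) → ℝ} (hg : ContinuousOn g Ω)
    (h0 : ∀ x, x ∉ K → g x = 0) : IntegrableOn g Ω := by
  have h1 : IntegrableOn g K := (hg.mono hKΩ).integrableOn_compact hK
  have h2 : IntegrableOn g (Ω \ K) :=
    integrableOn_zero.congr_fun (fun x hx => (h0 x hx.2).symm)
      (hΩ.measurableSet.diff hK.measurableSet)
  exact (h1.union h2).mono_set (fun x hx => by
    by_cases h : x ∈ K
    · exact Or.inl h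
    · exact Or.inr ⟨hx, h⟩)

lemma young_pt (q t : ℝ) (hq1 : 1 < q) (ht1 : 1 ≤ t) (m : ℕ) (hm2 : 2 ≤ m)
    (hmq : (t + q) / (q - 1) ≤ (m : ℝ)) (ε₂ : ℝ) (hε₂ : 0 < ε₂)
    (fx Ux Px Gx : ℝ) (hf : 0 ≤ fx) (hU : 0 < Ux) (hP0 : 0 ≤ Px) (hP1 : Px ≤ 1) (hG : 0 ≤ Gx) :
    ENNReal.ofReal (Ux ^ (t + 1) * Px ^ (2 * m - 2) * Gx) ≤
      ENNReal.ofReal (ε₂ * (fx * Ux ^ (t + q) * Px ^ (2 * m))) +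
        ENNReal.ofReal (ε₂ ^ (-((t + 1) / (q - 1)))) *
          ((ENNReal.ofReal fx) ^ (-(t + 1) / (q - 1)) * ENNReal.ofReal (Gx ^ ((t + q) / (q - 1)))) := by
  have htq : 0 < t + q := by linarith
  have ht0 : 0 < t + 1 := by linarith
  have hq0 : 0 < q - 1 := by linarith
  rcases hP0.eq_or_lt with hP | hP
  · rw [← hP, zero_pow (by omega : 2 * m - 2 ≠ 0)]
    simp
  rcases hf.eq_or_lt with hf0 | hf0
  · rcases hG.eq_or_lt with hG0 | hG0
    · rw [← hG0]
      simp
    · have hneg : -(t + 1) / (q - 1) < 0 := by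
        rw [neg_div]
        have : 0 < (t + 1) / (q - 1) := by positivity
        linarith
      have h1 : (ENNReal.ofReal fx) ^ (-(t + 1) / (q - 1)) = ⊤ := by
        rw [← hf0, ENNReal.ofReal_zero]
        exact ENNReal.zero_rpow_of_neg hneg
      have h2 : ENNReal.ofReal (Gx ^ ((t + q) / (q - 1))) ≠ 0 := by
        simp only [ne_eq, ENNReal.ofReal_eq_zero, not_le]
        exact Real.rpow_pos_of_pos hG0 _
      have h3 : ENNReal.ofReal (ε₂ ^ (-((t + 1) / (q - 1)))) ≠ 0 := by
        simp only [ne_eq, ENNReal.ofReal_eq_zero, not_le]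
        exact Real.rpow_pos_of_pos hε₂ _
      rw [h1, ENNReal.top_mul h2, ENNReal.mul_top h3]
      exact le_top.trans_eq (by simp)
  -- main case : fx > 0, Px > 0
  · set r := (t + q) / (t + 1) with hr
    set r' := (t + q) / (q - 1) with hr'
    have hrpos : 0 < r := by positivity
    have hr1 : 1 < r := by
      rw [hr, lt_div_iff₀ ht0]
      linarith
    have hr'pos : 0 < r' := by positivity
    have hr'1 : 1 < r' := by
      rw [hr', lt_div_iff₀ hq0]
      linarith
    have hconj : r.HolderConjugate r' := by
      refine ⟨?_, hrpos, hr'pos⟩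
      rw [inv_one, hr, hr', inv_div, inv_div, ← add_div, div_eq_one_iff_eq htq.ne']
      ring
    have hrr' : r⁻¹ * r' = (t + 1) / (q - 1) := by
      rw [hr, hr', inv_div]
      field_simp
    have hrinv : r⁻¹ = (t + 1) / (t + q) := by rw [hr, inv_div]
    have ecast : ((2 * m - 2 : ℕ) : ℝ) = 2 * (m : ℝ) - 2 := by
      rw [Nat.cast_sub (by omega : 2 ≤ 2 * m)]
      push_cast
      ring
    set X := ε₂ ^ r⁻¹ * (fx ^ r⁻¹ * Ux ^ (t + 1) * Px ^ ((2 * m : ℝ) * r⁻¹)) with hX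
    set Y := ε₂ ^ (-r⁻¹) * (fx ^ (-r⁻¹) * Gx * Px ^ (((2 * m : ℝ) - 2) - (2 * m : ℝ) * r⁻¹)) with hY
    have hXpos : 0 ≤ X := by
      have h1 := Real.rpow_nonneg hf r⁻¹
      have h2 := Real.rpow_nonneg (le_of_lt hP) ((2 * m : ℝ) * r⁻¹)
      positivity
    have hYpos : 0 ≤ Y := by
      have h1 := Real.rpow_nonneg hf (-r⁻¹)
      positivity
    have h0ε : ε₂ ^ r⁻¹ * ε₂ ^ (-r⁻¹) = 1 := by
      rw [← Real.rpow_add hε₂]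
      simp
    have h0f : fx ^ r⁻¹ * fx ^ (-r⁻¹) = 1 := by
      rw [← Real.rpow_add hf0]
      simp
    have h0P : Px ^ ((2 * m : ℝ) * r⁻¹) * Px ^ (((2 * m : ℝ) - 2) - (2 * m : ℝ) * r⁻¹)
        = Px ^ (2 * m - 2 : ℕ) := by
      rw [← Real.rpow_add hP, ← Real.rpow_natCast Px (2 * m - 2)]
      congr 1
      rw [ecast]
      ring
    have hXY : X * Y = Ux ^ (t + 1) * Px ^ (2 * m - 2) * Gx := by
      calc X * Y = (ε₂ ^ r⁻¹ * ε₂ ^ (-r⁻¹)) * ((fx ^ r⁻¹ * fx ^ (-r⁻¹)) *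
            ((Px ^ ((2 * m : ℝ) * r⁻¹) * Px ^ (((2 * m : ℝ) - 2) - (2 * m : ℝ) * r⁻¹)) *
              (Ux ^ (t + 1) * Gx))) := by
            rw [hX, hY]; ring
        _ = Ux ^ (t + 1) * Px ^ (2 * m - 2) * Gx := by
            rw [h0ε, h0f, h0P]; ring
    have hyoung : X * Y ≤ X ^ r + Y ^ r' := by
      have h := Real.young_inequality_of_nonneg hXpos hYpos hconj
      have hXr : 0 ≤ X ^ r := Real.rpow_nonneg hXpos r
      have hYr : 0 ≤ Y ^ r' := Real.rpow_nonneg hYpos r'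
      calc X * Y ≤ X ^ r / r + Y ^ r' / r' := h
        _ ≤ X ^ r + Y ^ r' := add_le_add (div_le_self hXr hr1.le) (div_le_self hYr hr'1.le)
    have hXr_eq : X ^ r = ε₂ * (fx * Ux ^ (t + q) * Px ^ (2 * m : ℕ)) := by
      rw [hX]
      rw [Real.mul_rpow (Real.rpow_nonneg hε₂.le _) (by positivity)]
      rw [Real.mul_rpow (by positivity) (Real.rpow_nonneg hP.le _)]
      rw [Real.mul_rpow (Real.rpow_nonneg hf _) (Real.rpow_nonneg hU.le _)]
      rw [← Real.rpow_mul hε₂.le, ← Real.rpow_mul hf, ← Real.rpow_mul hU.le,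
        ← Real.rpow_mul hP.le]
      have e1 : (t + 1) * r = t + q := by
        rw [hr]; field_simp
      have e2 : (2 * m : ℝ) * r⁻¹ * r = ((2 * m : ℕ) : ℝ) := by
        rw [mul_assoc, inv_mul_cancel₀ (ne_of_gt hrpos)]
        push_cast
        ring
      rw [e1, e2]
      simp only [inv_mul_cancel₀ (ne_of_gt hrpos), Real.rpow_one, Real.rpow_natCast]
      try ring
    have he : 0 ≤ ((2 * m : ℝ) - 2) - (2 * m : ℝ) * r⁻¹ := by
      have hmq' : t + q ≤ (m : ℝ) * (q - 1) := (div_le_iff₀ hq0).mp hmq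
      rw [hrinv, sub_nonneg]
      have hmm : 2 * (m:ℝ) * ((t + 1) / (t + q)) = (2 * m * (t + 1)) / (t + q) := by ring
      rw [hmm, div_le_iff₀ htq]
      nlinarith
    have hYr_le : Y ^ r' ≤ ε₂ ^ (-((t + 1) / (q - 1))) *
        (fx ^ (-((t + 1) / (q - 1))) * Gx ^ r') := by
      rw [hY]
      rw [Real.mul_rpow (Real.rpow_nonneg hε₂.le _) (by positivity)]
      rw [Real.mul_rpow (by positivity) (Real.rpow_nonneg hP.le _)]
      rw [Real.mul_rpow (Real.rpow_nonneg hf _) hG]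
      rw [← Real.rpow_mul hε₂.le, ← Real.rpow_mul hf, ← Real.rpow_mul hP.le]
      have e3 : -r⁻¹ * r' = -((t + 1) / (q - 1)) := by
        rw [neg_mul, hrr']
      rw [e3]
      have e4 : Px ^ ((((2 * m : ℝ) - 2) - (2 * m : ℝ) * r⁻¹) * r') ≤ 1 :=
        Real.rpow_le_one hP.le hP1 (mul_nonneg he hr'pos.le)
      have hrest : 0 ≤ ε₂ ^ (-((t + 1) / (q - 1))) * (fx ^ (-((t + 1) / (q - 1))) * Gx ^ r') := by
        have h1 := Real.rpow_nonneg hf (-((t + 1) / (q - 1)))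
        have h2 := Real.rpow_nonneg hG r'
        positivity
      refine le_trans (le_of_eq ?_) (mul_le_of_le_one_right hrest e4)
      ring
    have hkey : Ux ^ (t + 1) * Px ^ (2 * m - 2) * Gx ≤
        ε₂ * (fx * Ux ^ (t + q) * Px ^ (2 * m : ℕ)) +
          ε₂ ^ (-((t + 1) / (q - 1))) * (fx ^ (-((t + 1) / (q - 1))) * Gx ^ r') := by
      rw [← hXY, ← hXr_eq]
      exact hyoung.trans (by linarith)
    calc ENNReal.ofReal (Ux ^ (t + 1) * Px ^ (2 * m - 2) * Gx)
        ≤ ENNReal.ofReal (ε₂ * (fx * Ux ^ (t + q) * Px ^ (2 * m : ℕ)) +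
            ε₂ ^ (-((t + 1) / (q - 1))) * (fx ^ (-((t + 1) / (q - 1))) * Gx ^ r')) :=
          ENNReal.ofReal_le_ofReal hkey
      _ ≤ ENNReal.ofReal (ε₂ * (fx * Ux ^ (t + q) * Px ^ (2 * m : ℕ))) +
            ENNReal.ofReal (ε₂ ^ (-((t + 1) / (q - 1))) *
              (fx ^ (-((t + 1) / (q - 1))) * Gx ^ r')) := ENNReal.ofReal_add_le
      _ = ENNReal.ofReal (ε₂ * (fx * Ux ^ (t + q) * Px ^ (2 * m : ℕ))) +
            ENNReal.ofReal (ε₂ ^ (-((t + 1) / (q - 1)))) *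
              ((ENNReal.ofReal fx) ^ (-(t + 1) / (q - 1)) *
                ENNReal.ofReal (Gx ^ ((t + q) / (q - 1)))) := by
          congr 1
          rw [ENNReal.ofReal_mul (Real.rpow_nonneg hε₂.le _)]
          congr 1
          rw [ENNReal.ofReal_mul (Real.rpow_nonneg hf _)]
          congr 1
          rw [ENNReal.ofReal_rpow_of_pos hf0]
          congr 1
          rw [neg_div]

lemma delta_pos (p q t : ℝ) (hp : 2 ≤ p) (hq : p - 1 < q) (ht1 : 1 ≤ t)
    (ht2 : t < -1 + 2 * (q + Real.sqrt (q * (q - p + 1))) / (p - 1)) :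
    (p - 1) * (t + 1) ^ 2 < 4 * q * t := by
  have hp1 : 0 < p - 1 := by linarith
  have hq0 : 0 < q := by linarith
  set s := Real.sqrt (q * (q - p + 1)) with hsdef
  have hs0 : 0 ≤ s := Real.sqrt_nonneg _
  have hs : s ^ 2 = q * (q - p + 1) := Real.sq_sqrt (by nlinarith)
  have hA : (t + 1) * (p - 1) < 2 * (q + s) := by
    have h2 : t + 1 < 2 * (q + s) / (p - 1) := by linarith
    calc (t + 1) * (p - 1) < (2 * (q + s) / (p - 1)) * (p - 1) := by
          exact mul_lt_mul_of_pos_right h2 hp1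
      _ = 2 * (q + s) := by field_simp
  have hB : 0 < (p - 1) * (t + 1) - 2 * q + 2 * s := by
    have hsq : q - (p - 1) < s := by
      nlinarith [hs, hs0]
    nlinarith
  nlinarith [mul_pos (show (0:ℝ) < 2 * (q + s) - (t + 1) * (p - 1) by linarith) hB, hs]

lemma rpow_p2 {p : ℝ} (hp : 2 ≤ p) {N : ℝ} (hN : 0 ≤ N) : N ^ (p - 2) * N ^ (2:ℕ) = N ^ p := by
  rcases hN.eq_or_lt with h | h
  · rw [← h, zero_pow (two_ne_zero), mul_zero, Real.zero_rpow (by linarith : p ≠ 0)]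
  · rw [← Real.rpow_natCast N 2, ← Real.rpow_add h]
    norm_num

lemma ptwise_J {p : ℝ} (hp : 2 ≤ p) {t : ℝ} (ht1 : 1 ≤ t) {m : ℕ} (hm : 1 ≤ m)
    {ε : ℝ} (hε : 0 < ε) {U P N W ip : ℝ}
    (hU : 0 < U) (hP0 : 0 ≤ P) (hN : 0 ≤ N) (hW : 0 ≤ W) (hip : |ip| ≤ N * W) :
    |U ^ t * P ^ (2 * m - 1) * (N ^ (p - 2) * ip)| ≤
      ε * (N ^ p * U ^ (t - 1) * P ^ (2 * m)) +
        (1 / (4 * ε)) * (U ^ (t + 1) * P ^ (2 * m - 2) * (N ^ (p - 2) * W ^ 2)) := by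
  have hUt := Real.rpow_nonneg hU.le
  have hNt := Real.rpow_nonneg hN
  have hRHS : 0 ≤ ε * (N ^ p * U ^ (t - 1) * P ^ (2 * m)) +
      (1 / (4 * ε)) * (U ^ (t + 1) * P ^ (2 * m - 2) * (N ^ (p - 2) * W ^ 2)) := by
    have h1 := hNt p
    have h2 := hNt (p - 2)
    have h3 := hUt (t - 1)
    have h4 := hUt (t + 1)
    have h5 := pow_nonneg hP0 (2 * m)
    have h6 := pow_nonneg hP0 (2 * m - 2)
    positivity
  have habs : |U ^ t * P ^ (2 * m - 1) * (N ^ (p - 2) * ip)| ≤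
      U ^ t * P ^ (2 * m - 1) * (N ^ (p - 2) * (N * W)) := by
    have h1 : |U ^ t * P ^ (2 * m - 1) * (N ^ (p - 2) * ip)| =
        U ^ t * P ^ (2 * m - 1) * (N ^ (p - 2) * |ip|) := by
      rw [abs_mul, abs_mul, abs_mul, abs_of_nonneg (hUt t),
        abs_of_nonneg (pow_nonneg hP0 (2 * m - 1)), abs_of_nonneg (hNt (p - 2))]
    rw [h1]
    have hnn : 0 ≤ U ^ t * P ^ (2 * m - 1) := mul_nonneg (hUt t) (pow_nonneg hP0 _)
    exact mul_le_mul_of_nonneg_left (mul_le_mul_of_nonneg_left hip (hNt _)) hnn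
  rcases hN.eq_or_lt with hN0 | hN0
  · have : U ^ t * P ^ (2 * m - 1) * (N ^ (p - 2) * (N * W)) = 0 := by
      rw [← hN0]; ring
    linarith [habs]
  rcases hP0.eq_or_lt with hP | hP
  · have : U ^ t * P ^ (2 * m - 1) * (N ^ (p - 2) * (N * W)) = 0 := by
      rw [← hP, zero_pow (by omega : 2 * m - 1 ≠ 0)]; ring
    linarith [habs]
  -- positive case
  set X := U ^ ((t - 1) / 2) * P ^ m * N ^ (p / 2) with hX
  set Y := U ^ ((t + 1) / 2) * P ^ (m - 1) * N ^ ((p - 2) / 2) * W with hY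
  have hXY : X * Y = U ^ t * P ^ (2 * m - 1) * (N ^ (p - 2) * (N * W)) := by
    rw [hX, hY]
    rw [show U ^ ((t-1)/2) * P ^ m * N ^ (p/2) * (U ^ ((t+1)/2) * P ^ (m-1) * N ^ ((p-2)/2) * W)
        = (U ^ ((t-1)/2) * U ^ ((t+1)/2)) * (P ^ m * P ^ (m-1)) * (N ^ (p/2) * N ^ ((p-2)/2)) * W
        from by ring]
    rw [← Real.rpow_add hU, ← Real.rpow_add hN0, ← pow_add]
    rw [show (t-1)/2 + (t+1)/2 = t from by ring, show m + (m-1) = 2*m-1 from by omega,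
      show p/2 + (p-2)/2 = (p-2) + 1 from by ring, Real.rpow_add hN0, Real.rpow_one]
    ring
  have hX2 : X ^ (2:ℕ) = N ^ p * U ^ (t - 1) * P ^ (2 * m) := by
    rw [hX]
    rw [show (U ^ ((t-1)/2) * P ^ m * N ^ (p/2)) ^ (2:ℕ)
        = (U ^ ((t-1)/2) * U ^ ((t-1)/2)) * (P ^ m * P ^ m) * (N ^ (p/2) * N ^ (p/2)) from by ring]
    rw [← Real.rpow_add hU, ← Real.rpow_add hN0, ← pow_add]
    rw [show (t-1)/2 + (t-1)/2 = t - 1 from by ring, show m + m = 2*m from by omega,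
      show p/2 + p/2 = p from by ring]
    ring
  have hY2 : Y ^ (2:ℕ) = U ^ (t + 1) * P ^ (2 * m - 2) * (N ^ (p - 2) * W ^ 2) := by
    rw [hY]
    rw [show (U ^ ((t+1)/2) * P ^ (m-1) * N ^ ((p-2)/2) * W) ^ (2:ℕ)
        = (U ^ ((t+1)/2) * U ^ ((t+1)/2)) * (P ^ (m-1) * P ^ (m-1)) *
          (N ^ ((p-2)/2) * N ^ ((p-2)/2)) * W ^ 2 from by ring]
    rw [← Real.rpow_add hU, ← Real.rpow_add hN0, ← pow_add]
    rw [show (t+1)/2 + (t+1)/2 = t + 1 from by ring,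
      show (m-1) + (m-1) = 2*m-2 from by omega,
      show (p-2)/2 + (p-2)/2 = p - 2 from by ring]
    ring
  have hyoung : X * Y ≤ ε * X ^ (2:ℕ) + (1 / (4 * ε)) * Y ^ (2:ℕ) := by
    have key : ε * X ^ (2:ℕ) + (1 / (4 * ε)) * Y ^ (2:ℕ) - X * Y
        = (2 * ε * X - Y) ^ 2 / (4 * ε) := by
      field_simp
      ring
    nlinarith [div_nonneg (sq_nonneg (2 * ε * X - Y)) (by linarith : (0:ℝ) ≤ 4 * ε)]
  calc |U ^ t * P ^ (2 * m - 1) * (N ^ (p - 2) * ip)|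
      ≤ U ^ t * P ^ (2 * m - 1) * (N ^ (p - 2) * (N * W)) := habs
    _ = X * Y := hXY.symm
    _ ≤ ε * X ^ (2:ℕ) + (1 / (4 * ε)) * Y ^ (2:ℕ) := hyoung
    _ = _ := by rw [hX2, hY2]

lemma norm_smul_add_sq {n : ℕ} (a1 a2 : ℝ) (X Y : EuclideanSpace ℝ (Fin n)) :
    ‖a1 • X + a2 • Y‖ ^ 2 =
      a1 ^ 2 * ‖X‖ ^ 2 + 2 * (a1 * a2) * (inner ℝ X Y : ℝ) + a2 ^ 2 * ‖Y‖ ^ 2 := by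
  rw [norm_add_sq_real, real_inner_smul_left, real_inner_smul_right]
  simp only [norm_smul, Real.norm_eq_abs, mul_pow, sq_abs]
  ring


set_option maxHeartbeats 1000000 in
/-- **Statement 11.** Moser-iteration estimate (power nonlinearity, exponent `2m` on the
test function) for positive stable weak solutions of `-Δ_p u = f(x) u^q`, `q > p-1`:
`∫_Ω (|∇u|^p u^{t-1} + f u^{t+q}) φ^{2m} ≤ C ∫_Ω f^{-(t+1)/(q-1)} (|∇u|^{p-2}|∇φ|²)^{(t+q)/(q-1)}`,
with `C` independent of `Ω`, `f` and `u`; both sides are `[0,∞]`-valued integrals. -/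
theorem moser_estimate_power_2m
    (p q t : ℝ) (hp : 2 ≤ p) (hq : p - 1 < q)
    (ht1 : 1 ≤ t) (ht2 : t < -1 + 2 * (q + Real.sqrt (q * (q - p + 1))) / (p - 1)) :
    ∃ m₀ : ℕ, 1 ≤ m₀ ∧ ∀ m : ℕ, m₀ ≤ m → ∃ C : ℝ, 0 < C ∧
      ∀ (n : ℕ), 1 ≤ n →
      ∀ Ω : Set (EuclideanSpace ℝ (Fin n)), IsOpen Ω →
      ∀ f : EuclideanSpace ℝ (Fin n) → ℝ, ContinuousOn f Ω → (∀ x ∈ Ω, 0 ≤ f x) →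
      ∀ u : EuclideanSpace ℝ (Fin n) → ℝ, ContDiffOn ℝ 1 u Ω → (∀ x ∈ Ω, 0 < u x) →
      (∀ φ : EuclideanSpace ℝ (Fin n) → ℝ, ContDiff ℝ 1 φ → HasCompactSupport φ →
        tsupport φ ⊆ Ω →
        (∫ x in Ω, ‖gradient u x‖ ^ (p - 2) * (inner ℝ (gradient u x) (gradient φ x) : ℝ)) =
          ∫ x in Ω, f x * u x ^ q * φ x) →
      (∀ φ : EuclideanSpace ℝ (Fin n) → ℝ, ContDiff ℝ 1 φ → HasCompactSupport φ →
        tsupport φ ⊆ Ω →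
        q * (∫ x in Ω, f x * u x ^ (q - 1) * φ x ^ 2) ≤
          (p - 1) * ∫ x in Ω, ‖gradient u x‖ ^ (p - 2) * ‖gradient φ x‖ ^ 2) →
      ∀ φ : EuclideanSpace ℝ (Fin n) → ℝ, ContDiff ℝ 1 φ → HasCompactSupport φ →
        tsupport φ ⊆ Ω → (∀ x, 0 ≤ φ x) → (∀ x, φ x ≤ 1) →
        (∫⁻ x in Ω, ENNReal.ofReal
            ((‖gradient u x‖ ^ p * u x ^ (t - 1) + f x * u x ^ (t + q)) *
              φ x ^ (2 * (m : ℝ)))) ≤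
          ENNReal.ofReal C *
            ∫⁻ x in Ω, ENNReal.ofReal (f x) ^ (-(t + 1) / (q - 1)) *
              ENNReal.ofReal
                ((‖gradient u x‖ ^ (p - 2) * ‖gradient φ x‖ ^ 2) ^ ((t + q) / (q - 1))) := by
  have hp1 : 0 < p - 1 := by linarith
  have hq1 : 1 < q := by linarith
  have ht0 : 0 < t := by linarith
  refine ⟨max 2 ⌈(t + q) / (q - 1)⌉₊, le_trans (by norm_num) (le_max_left _ _), ?_⟩
  intro m hm
  have hm2 : 2 ≤ m := le_trans (le_max_left _ _) hm
  have hm0 : 0 < (m : ℝ) := by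
    have : 0 < m := by omega
    exact_mod_cast this
  have hmq : (t + q) / (q - 1) ≤ (m : ℝ) := by
    calc (t + q) / (q - 1) ≤ (⌈(t + q) / (q - 1)⌉₊ : ℝ) := Nat.le_ceil _
      _ ≤ m := by exact_mod_cast le_trans (le_max_right _ _) hm
  -- constants depending only on p, q, t, m
  set a : ℝ := (t + 1) / 2 with ha
  have ha0 : 0 < a := by rw [ha]; linarith
  have hΔ0 : 0 < q * t - (p - 1) * a ^ 2 := by
    have h := delta_pos p q t hp hq ht1 ht2
    rw [ha]
    nlinarith
  set Δ : ℝ := q * t - (p - 1) * a ^ 2 with hΔdef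
  set c₂ : ℝ := 2 * a * m * (p - 1) * (t + a) with hc₂def
  have hc₂0 : 0 < c₂ := by rw [hc₂def]; positivity
  set ε : ℝ := min (t / (4 * m)) (Δ / (4 * c₂)) with hεdef
  have hε0 : 0 < ε := lt_min (by positivity) (by positivity)
  have hεa : 4 * (m : ℝ) * ε ≤ t := by
    have h := min_le_left (t / (4 * m)) (Δ / (4 * c₂))
    rw [← hεdef] at h
    calc 4 * (m : ℝ) * ε ≤ 4 * (m : ℝ) * (t / (4 * m)) := by
          exact mul_le_mul_of_nonneg_left h (by positivity)
      _ = t := by field_simp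
  have hεb : 4 * c₂ * ε ≤ Δ := by
    have h := min_le_right (t / (4 * m)) (Δ / (4 * c₂))
    rw [← hεdef] at h
    calc 4 * c₂ * ε ≤ 4 * c₂ * (Δ / (4 * c₂)) := by
          exact mul_le_mul_of_nonneg_left h (by positivity)
      _ = Δ := by field_simp
  set C₃ : ℝ := c₂ * (m : ℝ) / t + c₂ * (1 / (4 * ε)) + t * ((p - 1) * (m : ℝ) ^ 2) with hC₃def
  have hC₃0 : 0 < C₃ := by rw [hC₃def]; positivity
  set C₁ : ℝ := (2 / t) * (2 * C₃ / Δ) + (m : ℝ) / (t * ε) + 2 * C₃ / Δ with hC₁def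
  have hC₁0 : 0 < C₁ := by rw [hC₁def]; positivity
  set ε₂ : ℝ := 1 / (2 * C₁) with hε₂def
  have hε₂0 : 0 < ε₂ := by rw [hε₂def]; positivity
  set Cy : ℝ := ε₂ ^ (-((t + 1) / (q - 1))) with hCydef
  have hCy0 : 0 < Cy := Real.rpow_pos_of_pos hε₂0 _
  clear_value a Δ c₂ ε C₃ C₁ ε₂ Cy
  refine ⟨2 * C₁ * Cy, by positivity, ?_⟩
  intro n hn Ω hΩ f hf hf0 u hu hupos hweak hstab φ hφ hφc hφΩ hφ0 hφ1
  -- notation-free integrands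
  set i₁ : EuclideanSpace ℝ (Fin n) → ℝ :=
    fun x => ‖gradient u x‖ ^ p * u x ^ (t - 1) * φ x ^ (2 * m) with hi₁def
  set i₂ : EuclideanSpace ℝ (Fin n) → ℝ :=
    fun x => f x * u x ^ (t + q) * φ x ^ (2 * m) with hi₂def
  set i₃ : EuclideanSpace ℝ (Fin n) → ℝ :=
    fun x => u x ^ t * φ x ^ (2 * m - 1) *
      (‖gradient u x‖ ^ (p - 2) * (inner ℝ (gradient u x) (gradient φ x) : ℝ)) with hi₃def
  set i₄ : EuclideanSpace ℝ (Fin n) → ℝ :=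
    fun x => u x ^ (t + 1) * φ x ^ (2 * m - 2) *
      (‖gradient u x‖ ^ (p - 2) * ‖gradient φ x‖ ^ 2) with hi₄def
  -- continuity facts
  have hgu : ContinuousOn (fun x => gradient u x) Ω := by
    have h := hu.continuousOn_fderiv_of_isOpen hΩ le_rfl
    exact (InnerProductSpace.toDual ℝ (EuclideanSpace ℝ (Fin n))).symm.continuous.comp_continuousOn h
  have hgφ : Continuous (fun x => gradient φ x) := by
    have h := hφ.continuous_fderiv one_ne_zero
    exact (InnerProductSpace.toDual ℝ (EuclideanSpace ℝ (Fin n))).symm.continuous.comp h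
  have hNc : ContinuousOn (fun x => ‖gradient u x‖) Ω := hgu.norm
  have huc : ContinuousOn u Ω := hu.continuousOn
  have hφcont : Continuous φ := hφ.continuous
  have hNppow : ∀ s : ℝ, 0 ≤ s → ContinuousOn (fun x => ‖gradient u x‖ ^ s) Ω :=
    fun s hs => hNc.rpow_const (fun x _ => Or.inr hs)
  have hupow : ∀ s : ℝ, ContinuousOn (fun x => u x ^ s) Ω :=
    fun s => huc.rpow_const (fun x hx => Or.inl (hupos x hx).ne')
  have hφpow : ∀ k : ℕ, Continuous (fun x => φ x ^ k) := fun k => hφcont.pow k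
  have hφzero : ∀ (k : ℕ), 1 ≤ k → ∀ x, x ∉ tsupport φ → φ x ^ k = 0 := by
    intro k hk x hx
    rw [image_eq_zero_of_notMem_tsupport hx, zero_pow (by omega : k ≠ 0)]
  -- integrability
  have hi₁int : IntegrableOn i₁ Ω := by
    refine integrableOn_of_supp hΩ hφc hφΩ ?_ ?_
    · exact ((hNppow p (by linarith)).mul (hupow (t - 1))).mul (hφpow (2 * m)).continuousOn
    · intro x hx
      rw [hi₁def]
      simp only
      rw [hφzero (2 * m) (by omega) x hx, mul_zero]
  have hi₂int : IntegrableOn i₂ Ω := by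
    refine integrableOn_of_supp hΩ hφc hφΩ ?_ ?_
    · exact ((hf.mul (hupow (t + q))).mul (hφpow (2 * m)).continuousOn)
    · intro x hx
      rw [hi₂def]
      simp only
      rw [hφzero (2 * m) (by omega) x hx, mul_zero]
  have hi₃int : IntegrableOn i₃ Ω := by
    refine integrableOn_of_supp hΩ hφc hφΩ ?_ ?_
    · exact ((hupow t).mul (hφpow (2 * m - 1)).continuousOn).mul
        ((hNppow (p - 2) (by linarith)).mul (hgu.inner hgφ.continuousOn))
    · intro x hx
      rw [hi₃def]
      simp only
      rw [hφzero (2 * m - 1) (by omega) x hx, mul_zero, zero_mul]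
  have hi₄int : IntegrableOn i₄ Ω := by
    refine integrableOn_of_supp hΩ hφc hφΩ ?_ ?_
    · exact ((hupow (t + 1)).mul (hφpow (2 * m - 2)).continuousOn).mul
        ((hNppow (p - 2) (by linarith)).mul ((hgφ.norm.pow 2).continuousOn))
    · intro x hx
      rw [hi₄def]
      simp only
      rw [hφzero (2 * m - 2) (by omega) x hx, mul_zero, zero_mul]
  set I : ℝ := ∫ x in Ω, i₁ x with hIdef
  set F : ℝ := ∫ x in Ω, i₂ x with hFdef
  set J : ℝ := ∫ x in Ω, i₃ x with hJdef
  set K4 : ℝ := ∫ x in Ω, i₄ x with hK4def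
  have hi₁nn : ∀ x ∈ Ω, 0 ≤ i₁ x := by
    intro x hx
    rw [hi₁def]
    have h1 := Real.rpow_nonneg (norm_nonneg (gradient u x)) p
    have h2 := Real.rpow_nonneg (hupos x hx).le (t - 1)
    have h3 := pow_nonneg (hφ0 x) (2 * m)
    positivity
  have hi₂nn : ∀ x ∈ Ω, 0 ≤ i₂ x := by
    intro x hx
    rw [hi₂def]
    have h1 := hf0 x hx
    have h2 := Real.rpow_nonneg (hupos x hx).le (t + q)
    have h3 := pow_nonneg (hφ0 x) (2 * m)
    positivity
  have hi₄nn : ∀ x ∈ Ω, 0 ≤ i₄ x := by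
    intro x hx
    rw [hi₄def]
    have h1 := Real.rpow_nonneg (hupos x hx).le (t + 1)
    have h2 := pow_nonneg (hφ0 x) (2 * m - 2)
    have h3 := Real.rpow_nonneg (norm_nonneg (gradient u x)) (p - 2)
    positivity
  have hI0 : 0 ≤ I := hIdef ▸ setIntegral_nonneg hΩ.measurableSet hi₁nn
  have hF0 : 0 ≤ F := hFdef ▸ setIntegral_nonneg hΩ.measurableSet hi₂nn
  have hK40 : 0 ≤ K4 := hK4def ▸ setIntegral_nonneg hΩ.measurableSet hi₄nn
  clear_value I F J K4
  -- Step A : weak formulation with w₁ = u^t φ^(2m)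
  have hA : t * I + 2 * (m : ℝ) * J = F := by
    obtain ⟨w₁, hw₁cd, hw₁cs, hw₁supp, hw₁eq, hw₁grad⟩ :=
      ext_lemma hΩ hu hupos hφ hφc hφΩ t (2 * m) (by omega)
    have hweak₁ := hweak w₁ hw₁cd hw₁cs hw₁supp
    have eL : ∀ x ∈ Ω, ‖gradient u x‖ ^ (p - 2) *
        (inner ℝ (gradient u x) (gradient w₁ x) : ℝ) = t * i₁ x + (2 * (m : ℝ)) * i₃ x := by
      intro x hx
      rw [hw₁grad x hx, inner_add_right, real_inner_smul_right, real_inner_smul_right,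
        real_inner_self_eq_norm_sq]
      have hNp := rpow_p2 hp (norm_nonneg (gradient u x))
      rw [hi₁def, hi₃def]
      simp only
      push_cast
      linear_combination (t * u x ^ (t - 1) * φ x ^ (2 * m)) * hNp
    have eR : ∀ x ∈ Ω, f x * u x ^ q * w₁ x = i₂ x := by
      intro x hx
      rw [hw₁eq x hx, hi₂def]
      simp only
      have h : u x ^ q * u x ^ t = u x ^ (t + q) := by
        rw [← Real.rpow_add (hupos x hx)]
        ring_nf
      linear_combination (f x * φ x ^ (2 * m)) * h
    rw [setIntegral_congr_fun hΩ.measurableSet eL, setIntegral_congr_fun hΩ.measurableSet eR]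
      at hweak₁
    rw [integral_add (hi₁int.const_mul t) (hi₃int.const_mul _), integral_const_mul,
      integral_const_mul] at hweak₁
    rw [hIdef, hJdef, hFdef]
    exact hweak₁
  -- Step B : stability with w₂ = u^a φ^m
  have hB : q * F ≤ (p - 1) * (a ^ 2 * I + 2 * a * (m : ℝ) * J + (m : ℝ) ^ 2 * K4) := by
    obtain ⟨w₂, hw₂cd, hw₂cs, hw₂supp, hw₂eq, hw₂grad⟩ :=
      ext_lemma hΩ hu hupos hφ hφc hφΩ a m (by omega)
    have hstab₂ := hstab w₂ hw₂cd hw₂cs hw₂supp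
    have eL : ∀ x ∈ Ω, f x * u x ^ (q - 1) * w₂ x ^ 2 = i₂ x := by
      intro x hx
      rw [hw₂eq x hx, hi₂def]
      simp only
      have h1 : u x ^ a * u x ^ a = u x ^ (t + 1) := by
        rw [← Real.rpow_add (hupos x hx), ha]
        ring_nf
      have h2 : u x ^ (q - 1) * u x ^ (t + 1) = u x ^ (t + q) := by
        rw [← Real.rpow_add (hupos x hx)]
        ring_nf
      have h3 : φ x ^ m * φ x ^ m = φ x ^ (2 * m) := by
        rw [← pow_add]
        congr 1
        omega
      calc f x * u x ^ (q - 1) * (u x ^ a * φ x ^ m) ^ 2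
          = f x * (u x ^ (q - 1) * (u x ^ a * u x ^ a)) * (φ x ^ m * φ x ^ m) := by ring
        _ = f x * u x ^ (t + q) * φ x ^ (2 * m) := by rw [h1, h3, h2]
    have eR : ∀ x ∈ Ω, ‖gradient u x‖ ^ (p - 2) * ‖gradient w₂ x‖ ^ 2 =
        a ^ 2 * i₁ x + (2 * a * (m : ℝ)) * i₃ x + (m : ℝ) ^ 2 * i₄ x := by
      intro x hx
      rw [hw₂grad x hx, norm_smul_add_sq]
      have hNp := rpow_p2 hp (norm_nonneg (gradient u x))
      have h2 : u x ^ (a - 1) * u x ^ (a - 1) = u x ^ (t - 1) := by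
        rw [← Real.rpow_add (hupos x hx), ha]
        ring_nf
      have h3 : u x ^ (a - 1) * u x ^ a = u x ^ t := by
        rw [← Real.rpow_add (hupos x hx), ha]
        ring_nf
      have h4 : u x ^ a * u x ^ a = u x ^ (t + 1) := by
        rw [← Real.rpow_add (hupos x hx), ha]
        ring_nf
      have h5 : φ x ^ m * φ x ^ m = φ x ^ (2 * m) := by
        rw [← pow_add]; congr 1; omega
      have h6 : φ x ^ m * φ x ^ (m - 1) = φ x ^ (2 * m - 1) := by
        rw [← pow_add]; congr 1; omega
      have h7 : φ x ^ (m - 1) * φ x ^ (m - 1) = φ x ^ (2 * m - 2) := by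
        rw [← pow_add]; congr 1; omega
      rw [hi₁def, hi₃def, hi₄def]
      simp only
      linear_combination
        (a ^ 2 * (u x ^ (a - 1) * u x ^ (a - 1)) * (φ x ^ m * φ x ^ m)) * hNp +
        (a ^ 2 * ‖gradient u x‖ ^ p * (φ x ^ m * φ x ^ m)) * h2 +
        (a ^ 2 * ‖gradient u x‖ ^ p * u x ^ (t - 1)) * h5 +
        (2 * a * (m : ℝ) * ‖gradient u x‖ ^ (p - 2) *
          (inner ℝ (gradient u x) (gradient φ x) : ℝ) * (φ x ^ m * φ x ^ (m - 1))) * h3 +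
        (2 * a * (m : ℝ) * ‖gradient u x‖ ^ (p - 2) *
          (inner ℝ (gradient u x) (gradient φ x) : ℝ) * u x ^ t) * h6 +
        ((m : ℝ) ^ 2 * ‖gradient u x‖ ^ (p - 2) * ‖gradient φ x‖ ^ 2 *
          (φ x ^ (m - 1) * φ x ^ (m - 1))) * h4 +
        ((m : ℝ) ^ 2 * ‖gradient u x‖ ^ (p - 2) * ‖gradient φ x‖ ^ 2 * u x ^ (t + 1)) * h7
    rw [setIntegral_congr_fun hΩ.measurableSet eL, setIntegral_congr_fun hΩ.measurableSet eR]
      at hstab₂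
    have hsplitB : (∫ x in Ω, (a ^ 2 * i₁ x + 2 * a * (m : ℝ) * i₃ x + (m : ℝ) ^ 2 * i₄ x))
        = a ^ 2 * (∫ x in Ω, i₁ x) + 2 * a * (m : ℝ) * (∫ x in Ω, i₃ x) +
          (m : ℝ) ^ 2 * (∫ x in Ω, i₄ x) := by
      have h1 : (∫ x in Ω, (a ^ 2 * i₁ x + 2 * a * (m : ℝ) * i₃ x + (m : ℝ) ^ 2 * i₄ x))
          = (∫ x in Ω, (a ^ 2 * i₁ x + 2 * a * (m : ℝ) * i₃ x)) +
            ∫ x in Ω, (m : ℝ) ^ 2 * i₄ x :=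
        integral_add ((hi₁int.const_mul _).add (hi₃int.const_mul _)) (hi₄int.const_mul _)
      rw [h1, integral_add (hi₁int.const_mul _) (hi₃int.const_mul _), integral_const_mul,
        integral_const_mul, integral_const_mul]
    rw [hsplitB] at hstab₂
    rw [hIdef, hJdef, hK4def, hFdef]
    exact hstab₂
  -- bound on |J|
  have hJb : |J| ≤ ε * I + (1 / (4 * ε)) * K4 := by
    have h1 : |J| ≤ ∫ x in Ω, |i₃ x| := by
      rw [hJdef]
      have := norm_integral_le_integral_norm (μ := volume.restrict Ω) i₃
      simpa [Real.norm_eq_abs] using this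
    have h2 : ∫ x in Ω, |i₃ x| ≤ ∫ x in Ω, (ε * i₁ x + (1 / (4 * ε)) * i₄ x) := by
      refine setIntegral_mono_on hi₃int.abs
        ((hi₁int.const_mul ε).add (hi₄int.const_mul _)) hΩ.measurableSet ?_
      intro x hx
      rw [hi₁def, hi₃def, hi₄def]
      simp only
      exact ptwise_J hp ht1 (by omega : 1 ≤ m) hε0 (hupos x hx) (hφ0 x)
        (norm_nonneg _) (norm_nonneg _) (abs_real_inner_le_norm _ _)
    rw [integral_add (hi₁int.const_mul ε) (hi₄int.const_mul _), integral_const_mul,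
      integral_const_mul, ← hIdef, ← hK4def] at h2
    exact h1.trans h2
  -- the crucial real estimate : I + F ≤ C₁ K4
  have hIF : I + F ≤ C₁ * K4 := by
    have s1 : t * I ≤ F + 2 * (m : ℝ) * |J| := by
      have e := mul_le_mul_of_nonneg_left (neg_abs_le J) (by positivity : (0:ℝ) ≤ 2 * (m : ℝ))
      linarith only [hA, e]
    have s2 : t * I ≤ F + 2 * (m : ℝ) * ε * I + (2 * (m : ℝ)) * (1 / (4 * ε)) * K4 := by
      have e := mul_le_mul_of_nonneg_left hJb (by positivity : (0:ℝ) ≤ 2 * (m : ℝ))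
      linarith only [s1, e]
    have s4 : t * I ≤ 2 * F + ((m : ℝ) / ε) * K4 := by
      have h1 : 2 * (m : ℝ) * ε * I ≤ (t / 2) * I := by
        apply mul_le_mul_of_nonneg_right _ hI0
        linarith
      have h2 : (2 * (m : ℝ)) * (1 / (4 * ε)) = (m : ℝ) / (2 * ε) := by
        field_simp
        ring
      have h4 : (t / 2) * I ≤ F + ((m : ℝ) / (2 * ε)) * K4 := by
        rw [h2] at s2
        linarith only [s2, h1]
      have h5 : (((m : ℝ) / (2 * ε)) * 2) * K4 = ((m : ℝ) / ε) * K4 := by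
        rw [show ((m : ℝ) / (2 * ε)) * 2 = (m : ℝ) / ε from by field_simp]
      linarith only [h4, h5]
    have habsJ : (t - a) * J ≤ (t + a) * |J| := by
      have e1 := mul_nonneg ht0.le (sub_nonneg.mpr (le_abs_self J))
      have e2 := mul_nonneg ha0.le (by linarith only [neg_abs_le J] : (0:ℝ) ≤ |J| + J)
      linarith only [e1, e2]
    have s5 : Δ * F ≤ c₂ * |J| + t * ((p - 1) * (m : ℝ) ^ 2) * K4 := by
      have e1 := mul_le_mul_of_nonneg_left hB ht0.le
      have e2 : (p - 1) * a ^ 2 * (t * I) = (p - 1) * a ^ 2 * (F - 2 * (m : ℝ) * J) := by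
        rw [show F - 2 * (m : ℝ) * J = t * I from by linarith]
      have e3 := mul_le_mul_of_nonneg_left habsJ
        (by positivity : (0:ℝ) ≤ 2 * a * (m : ℝ) * (p - 1))
      rw [hΔdef, hc₂def]
      linarith only [e1, e2, e3]
    have s6 : Δ * F ≤ c₂ * ε * I + (c₂ * (1 / (4 * ε))) * K4 +
        t * ((p - 1) * (m : ℝ) ^ 2) * K4 := by
      have e := mul_le_mul_of_nonneg_left hJb hc₂0.le
      linarith only [s5, e]
    have s7 : c₂ * ε * I ≤ c₂ * ε / t * 2 * F + c₂ * (m : ℝ) / t * K4 := by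
      have h := mul_le_mul_of_nonneg_left s4 (by positivity : (0:ℝ) ≤ c₂ * ε / t)
      have he : (c₂ * ε / t) * (t * I) = c₂ * ε * I := by
        field_simp
      have he2 : (c₂ * ε / t) * (2 * F + ((m : ℝ) / ε) * K4)
          = c₂ * ε / t * 2 * F + c₂ * (m : ℝ) / t * K4 := by
        field_simp
      rw [he, he2] at h
      exact h
    have s8 : (c₂ * ε / t) * 2 * F ≤ (Δ / 2) * F := by
      apply mul_le_mul_of_nonneg_right _ hF0
      have h1 : c₂ * ε / t ≤ c₂ * ε := by
        apply div_le_self (by positivity) ht1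
      linarith only [h1, hεb]
    have s9 : (Δ / 2) * F ≤ C₃ * K4 := by
      rw [hC₃def]
      linarith only [s6, s7, s8]
    have s10 : F ≤ (2 * C₃ / Δ) * K4 := by
      have h := mul_le_mul_of_nonneg_left s9 (by positivity : (0:ℝ) ≤ 2 / Δ)
      have he : (2 / Δ) * ((Δ / 2) * F) = F := by
        field_simp
      have he2 : (2 / Δ) * (C₃ * K4) = (2 * C₃ / Δ) * K4 := by
        ring
      rw [he, he2] at h
      linarith only [h]
    have s11 : I ≤ (2 / t) * F + ((m : ℝ) / (t * ε)) * K4 := by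
      have h := mul_le_mul_of_nonneg_left s4 (by positivity : (0:ℝ) ≤ 1 / t)
      have he : (1 / t) * (t * I) = I := by field_simp
      have he2 : (1 / t) * (2 * F + ((m : ℝ) / ε) * K4)
          = (2 / t) * F + ((m : ℝ) / (t * ε)) * K4 := by
        field_simp
      rw [he, he2] at h
      linarith only [h]
    have s12 : (2 / t) * F ≤ (2 / t) * ((2 * C₃ / Δ) * K4) :=
      mul_le_mul_of_nonneg_left s10 (by positivity)
    rw [hC₁def]
    linarith only [s10, s11, s12]
  -- convert the goal to lintegrals
  have hgoalL : (∫⁻ x in Ω, ENNReal.ofReal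
      ((‖gradient u x‖ ^ p * u x ^ (t - 1) + f x * u x ^ (t + q)) * φ x ^ (2 * (m : ℝ))))
      = ENNReal.ofReal (I + F) := by
    have hcast : ∀ x, φ x ^ (2 * (m : ℝ)) = φ x ^ (2 * m : ℕ) := by
      intro x
      rw [← Real.rpow_natCast (φ x) (2 * m)]
      congr 1
      push_cast
      ring
    have e0 : ∀ x, (‖gradient u x‖ ^ p * u x ^ (t - 1) + f x * u x ^ (t + q)) *
        φ x ^ (2 * (m : ℝ)) = i₁ x + i₂ x := by
      intro x
      rw [hcast x, hi₁def, hi₂def]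
      simp only
      ring
    have h1 : (∫⁻ x in Ω, ENNReal.ofReal
        ((‖gradient u x‖ ^ p * u x ^ (t - 1) + f x * u x ^ (t + q)) * φ x ^ (2 * (m : ℝ))))
        = ∫⁻ x in Ω, ENNReal.ofReal (i₁ x + i₂ x) := by
      apply lintegral_congr
      intro x
      rw [e0 x]
    have h2 : ENNReal.ofReal (∫ x in Ω, (i₁ x + i₂ x)) =
        ∫⁻ x in Ω, ENNReal.ofReal (i₁ x + i₂ x) := by
      refine ofReal_integral_eq_lintegral_ofReal (hi₁int.add hi₂int) ?_
      filter_upwards [ae_restrict_mem hΩ.measurableSet] with x hx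
      exact add_nonneg (hi₁nn x hx) (hi₂nn x hx)
    rw [h1, ← h2, integral_add hi₁int hi₂int, ← hIdef, ← hFdef]
  rw [hgoalL]
  set R : ℝ≥0∞ := ∫⁻ x in Ω, ENNReal.ofReal (f x) ^ (-(t + 1) / (q - 1)) *
      ENNReal.ofReal ((‖gradient u x‖ ^ (p - 2) * ‖gradient φ x‖ ^ 2) ^ ((t + q) / (q - 1)))
    with hRdef
  by_cases hR : R = ⊤
  · rw [hR, ENNReal.mul_top (by
      simp only [ne_eq, ENNReal.ofReal_eq_zero, not_le]
      positivity)]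
    exact le_top
  -- pointwise Young and conclusion
  have hKofReal : (∫⁻ x in Ω, ENNReal.ofReal (i₄ x)) = ENNReal.ofReal K4 := by
    rw [← ofReal_integral_eq_lintegral_ofReal hi₄int ?_, ← hK4def]
    filter_upwards [ae_restrict_mem hΩ.measurableSet] with x hx
    exact hi₄nn x hx
  have hmono : (∫⁻ x in Ω, ENNReal.ofReal (i₄ x)) ≤
      ∫⁻ x in Ω, (ENNReal.ofReal (ε₂ * i₂ x) + ENNReal.ofReal Cy *
        (ENNReal.ofReal (f x) ^ (-(t + 1) / (q - 1)) *
          ENNReal.ofReal ((‖gradient u x‖ ^ (p - 2) * ‖gradient φ x‖ ^ 2) ^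
            ((t + q) / (q - 1))))) := by
    refine lintegral_mono_ae ?_
    filter_upwards [ae_restrict_mem hΩ.measurableSet] with x hx
    have hGnn : 0 ≤ ‖gradient u x‖ ^ (p - 2) * ‖gradient φ x‖ ^ 2 := by
      have h1 := Real.rpow_nonneg (norm_nonneg (gradient u x)) (p - 2)
      positivity
    have h := young_pt q t hq1 ht1 m hm2 hmq ε₂ hε₂0 (f x) (u x) (φ x)
      (‖gradient u x‖ ^ (p - 2) * ‖gradient φ x‖ ^ 2) (hf0 x hx) (hupos x hx)
      (hφ0 x) (hφ1 x) hGnn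
    rw [hi₄def, hi₂def, hCydef]
    simp only
    convert h using 3 <;> ring
  have hsplit : (∫⁻ x in Ω, (ENNReal.ofReal (ε₂ * i₂ x) + ENNReal.ofReal Cy *
      (ENNReal.ofReal (f x) ^ (-(t + 1) / (q - 1)) *
        ENNReal.ofReal ((‖gradient u x‖ ^ (p - 2) * ‖gradient φ x‖ ^ 2) ^
          ((t + q) / (q - 1))))))
      = ENNReal.ofReal (ε₂ * F) + ENNReal.ofReal Cy * R := by
    rw [lintegral_add_left' (((hi₂int.const_mul ε₂).aestronglyMeasurable.aemeasurable).ennreal_ofReal)]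
    rw [lintegral_const_mul' _ _ ENNReal.ofReal_ne_top]
    congr 1
    rw [← ofReal_integral_eq_lintegral_ofReal (hi₂int.const_mul ε₂) ?_, integral_const_mul,
      ← hFdef]
    filter_upwards [ae_restrict_mem hΩ.measurableSet] with x hx
    exact mul_nonneg hε₂0.le (hi₂nn x hx)
  have hKle : ENNReal.ofReal K4 ≤ ENNReal.ofReal (ε₂ * F) + ENNReal.ofReal Cy * R := by
    rw [← hKofReal, ← hsplit]
    exact hmono
  have hfin : ENNReal.ofReal (ε₂ * F) + ENNReal.ofReal Cy * R ≠ ⊤ :=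
    ENNReal.add_ne_top.mpr ⟨ENNReal.ofReal_ne_top, ENNReal.mul_ne_top ENNReal.ofReal_ne_top hR⟩
  have hK4le : K4 ≤ ε₂ * F + Cy * R.toReal := by
    have h := ENNReal.toReal_mono hfin hKle
    rw [ENNReal.toReal_add ENNReal.ofReal_ne_top
        (ENNReal.mul_ne_top ENNReal.ofReal_ne_top hR),
      ENNReal.toReal_mul, ENNReal.toReal_ofReal (mul_nonneg hε₂0.le hF0),
      ENNReal.toReal_ofReal hCy0.le, ENNReal.toReal_ofReal hK40] at h
    exact h
  have hRt0 : 0 ≤ R.toReal := ENNReal.toReal_nonneg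
  have hfinal : I + F ≤ (2 * C₁ * Cy) * R.toReal := by
    have h1 : C₁ * K4 ≤ C₁ * (ε₂ * F + Cy * R.toReal) :=
      mul_le_mul_of_nonneg_left hK4le hC₁0.le
    have h2 : C₁ * ε₂ = 1 / 2 := by
      rw [hε₂def]
      field_simp
    have h3 : C₁ * ε₂ * F = (1 / 2) * F := by rw [h2]
    linarith only [hIF, h1, h3, hI0, hF0]
  calc ENNReal.ofReal (I + F) ≤ ENNReal.ofReal ((2 * C₁ * Cy) * R.toReal) :=
        ENNReal.ofReal_le_ofReal hfinal
    _ = ENNReal.ofReal (2 * C₁ * Cy) * ENNReal.ofReal R.toReal :=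
        ENNReal.ofReal_mul (by positivity)
    _ = ENNReal.ofReal (2 * C₁ * Cy) * R := by rw [ENNReal.ofReal_toReal hR]

end
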